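/- For a one-dimensional discretized system with Hamiltonian H(p,q) = p²/(2m) + V(q) (so that ∂²H/∂p² = 1/m, ∂²H/∂p∂q = 0, ∂²H/∂q² = V''(q)), the Schur complement D4 − D3·D1⁻¹·D2 of the block Hamilton–Jacobi matrix Ã_N equals m·A_N, where A_N is the discrete Jacobi (second-difference) operator with entries (A_N)_{jk} = −1 if |j−k| = 1; (A_N)_{11} = a1/m + 1 − V''_1/m; (A_N)_{jj} = 2 − V''_j/m for 2 ≤ j ≤ N−1; (A_N)_{NN} = −a2/m + 1; and 0 otherwise. Consequently det Ã_N = (−1)^{N−1} m · det A_N. -/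

import Mathlib

open Matrix

lemma aux_sum (n a b : ℕ) (hn : 1 ≤ n) (ha : a ≤ n) (hb : b ≤ n) :
    ∑ i ∈ Finset.range n,
      ((if a = i then (-1:ℝ) else if a = i+1 then 1 else 0) *
       (if b = i then (-1:ℝ) else if b = i+1 then 1 else 0)) =
    (if b = a + 1 ∨ a = b + 1 then -1 else if a = b then
       (if a = 0 then 1 else if a = n then 1 else 2) else 0) := by
  set fb : ℕ → ℝ := fun x => if b = x then (-1:ℝ) else if b = x+1 then 1 else 0 with hfb
  have hsplit : ∀ i, (if a = i then (-1:ℝ) else if a = i+1 then 1 else 0) * fb i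
      = (if i = a then -(fb a) else 0) + (if i + 1 = a then fb i else 0) := by
    intro i
    rcases eq_or_ne i a with h | h
    · subst h; simp [show ¬(i+1 = i) by omega]
    · rw [if_neg h, if_neg (show ¬(a = i) from fun hh => h hh.symm)]
      rcases eq_or_ne (i+1) a with h2 | h2
      · rw [if_pos h2, if_pos h2.symm]; ring
      · rw [if_neg h2, if_neg (show ¬(a = i+1) from fun hh => h2 hh.symm)]; ring
  rw [Finset.sum_congr rfl (fun i _ => hsplit i), Finset.sum_add_distrib]
  rw [Finset.sum_ite_eq' (Finset.range n) a (fun _ => -(fb a))]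
  have h2 : (∑ i ∈ Finset.range n, if i + 1 = a then fb i else 0)
      = if 1 ≤ a then fb (a - 1) else 0 := by
    rcases a with _ | c
    · simp
    · have hc : ∀ i, (if i + 1 = c + 1 then fb i else 0) = (if i = c then fb i else 0) := by
        intro i; simp [Nat.succ_inj]
      rw [Finset.sum_congr rfl (fun i _ => hc i), Finset.sum_ite_eq' (Finset.range n) c fb]
      simp [Finset.mem_range, show c < n by omega]
  rw [h2]
  simp only [hfb, Finset.mem_range]
  split_ifs <;> first | omega | norm_num


/-- For the discretized Hamiltonian `H(p,q) = p²/(2m) + V(q)`, the Schur complement of the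
block Hamilton–Jacobi matrix equals `m • A_N`, and `det Ã_N = (-1)^(N-1) * m * det A_N`. -/
theorem discrete_schur_AN (N : ℕ) (hN : 2 ≤ N) (m a1 a2 : ℝ) (hm : m ≠ 0) (v : Fin N → ℝ)
    (D1 : Matrix (Fin (N-1)) (Fin (N-1)) ℝ) (D2 : Matrix (Fin (N-1)) (Fin N) ℝ)
    (D3 : Matrix (Fin N) (Fin (N-1)) ℝ) (D4 : Matrix (Fin N) (Fin N) ℝ)
    (AN : Matrix (Fin N) (Fin N) ℝ)
    (hD1 : D1 = Matrix.diagonal (fun _ => -1/m))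
    (hD2 : D2 = Matrix.of fun (i : Fin (N-1)) (j : Fin N) => if (j : ℕ) = (i : ℕ) then -1
      else if (j : ℕ) = (i : ℕ) + 1 then 1 else 0)
    (hD3 : D3 = D2ᵀ)
    (hD4 : D4 = Matrix.diagonal (fun (i : Fin N) => if (i : ℕ) = 0 then a1 - v i
      else if (i : ℕ) = N - 1 then -a2 else -v i))
    (hAN : AN = Matrix.of fun (j k : Fin N) =>
      if (j : ℕ) + 1 = (k : ℕ) ∨ (k : ℕ) + 1 = (j : ℕ) then -1
      else if j = k then
        (if (j : ℕ) = 0 then a1/m + 1 - v j / m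
         else if (j : ℕ) = N - 1 then -a2/m + 1
         else 2 - v j / m)
      else 0) :
    D4 - D3 * D1⁻¹ * D2 = m • AN ∧
    (Matrix.fromBlocks D1 D2 D3 D4).det = (-1)^(N-1) * m * AN.det := by
  have hD1inv : D1⁻¹ = (-m) • (1 : Matrix (Fin (N-1)) (Fin (N-1)) ℝ) := by
    apply Matrix.inv_eq_right_inv
    rw [hD1, Matrix.mul_smul, Matrix.mul_one]
    ext i j
    simp only [Matrix.smul_apply, Matrix.diagonal_apply, Matrix.one_apply, smul_eq_mul]
    split_ifs
    · field_simp
    · ring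
  have hT : D3 * D1⁻¹ * D2 = (-m) • (D2ᵀ * D2) := by
    rw [hD3, hD1inv, Matrix.mul_smul, Matrix.mul_one, Matrix.smul_mul]
  have hsum : ∀ j k : Fin N, (D2ᵀ * D2) j k =
      (if (k:ℕ) = (j:ℕ) + 1 ∨ (j:ℕ) = (k:ℕ) + 1 then -1 else if (j:ℕ) = (k:ℕ) then
        (if (j:ℕ) = 0 then 1 else if (j:ℕ) = N-1 then 1 else 2) else 0) := by
    intro j k
    rw [Matrix.mul_apply]
    have := aux_sum (N-1) j.val k.val (by omega) (by omega) (by omega)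
    rw [← this]
    rw [← Fin.sum_univ_eq_sum_range (fun i =>
      ((if (j:ℕ) = i then (-1:ℝ) else if (j:ℕ) = i+1 then 1 else 0) *
       (if (k:ℕ) = i then (-1:ℝ) else if (k:ℕ) = i+1 then 1 else 0))) (N-1)]
    apply Finset.sum_congr rfl
    intro i _
    simp [hD2, Matrix.transpose_apply]
  have hschur : D4 - D3 * D1⁻¹ * D2 = m • AN := by
    rw [hT]
    ext j k
    have hjk := hsum j k
    simp only [Matrix.sub_apply, Matrix.smul_apply, hjk, hD4, hAN, Matrix.diagonal_apply,
      Matrix.of_apply, smul_eq_mul, Fin.ext_iff]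
    have hj := j.isLt
    have hk := k.isLt
    split_ifs <;> first | (exfalso; omega) | (field_simp; try ring)
  refine ⟨hschur, ?_⟩
  have hdet1 : D1.det = (-1/m)^(N-1) := by
    rw [hD1, Matrix.det_diagonal]
    simp
    rw [div_pow]
  haveI : Invertible D1 := by
    apply D1.invertibleOfIsUnitDet
    rw [hdet1]
    exact ((div_ne_zero (by norm_num : (-1:ℝ) ≠ 0) hm).isUnit).pow _
  rw [Matrix.det_fromBlocks₁₁, Matrix.invOf_eq_nonsing_inv, hschur, hdet1, Matrix.det_smul]
  have hcard : Fintype.card (Fin N) = N := by simp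
  rw [hcard]
  have hNpow : m ^ N = m ^ (N-1) * m := by
    rw [← pow_succ]
    congr 1
    omega
  have hmp : (m:ℝ) ^ (N-1) ≠ 0 := pow_ne_zero _ hm
  rw [hNpow, div_pow]
  field_simp
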